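/- Let K ⊆ E be a regular cone and F a ν-normal barrier for K with negative curvature. Let x ∈ int K and h ∈ E with x + h ∈ int K, and define σ_x(h) = min{ρ ≥ 0 : ρ·x − h ∈ K}. Then for every α ∈ [0,1): (1/(1 + α·σ_x(h))²)·∇²F(x) ⪯ ∇²F(x + αh) ⪯ (1/(1 − α)²)·∇²F(x) in the Loewner order. -/

import Mathlib

open Set Filter Topology RealInnerProductSpace

open Pointwise

set_option maxHeartbeats 1000000

noncomputable section

/-- The dual cone of a set `K` in a real inner product space. -/
def dualConeSet {E : Type*} [NormedAddCommGroup E] [InnerProductSpace ℝ E] (K : Set E) :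
    Set E :=
  {s : E | ∀ x ∈ K, 0 ≤ ⟪s, x⟫}

/-- A regular cone: closed, convex, pointed, with nonempty interior. -/
structure IsRegularCone {E : Type*} [NormedAddCommGroup E] [InnerProductSpace ℝ E]
    (K : Set E) : Prop where
  isClosed : IsClosed K
  convex : Convex ℝ K
  smul_mem : ∀ ⦃x : E⦄, x ∈ K → ∀ ⦃t : ℝ⦄, 0 ≤ t → t • x ∈ K
  pointed : ∀ ⦃x : E⦄, x ∈ K → -x ∈ K → x = 0
  interior_nonempty : (interior K).Nonempty

/-- The Hessian of `f` at `x`, as a continuous linear map (the derivative of the gradient). -/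
def hess {E : Type*} [NormedAddCommGroup E] [InnerProductSpace ℝ E] [CompleteSpace E]
    (f : E → ℝ) (x : E) : E →L[ℝ] E :=
  fderiv ℝ (gradient f) x

/-- A ν-normal barrier for the cone `K`: C³, convex, with positive definite Hessians on
`int K`, self-concordant, and ν-logarithmically homogeneous. -/
structure IsNormalBarrier {E : Type*} [NormedAddCommGroup E] [InnerProductSpace ℝ E]
    [CompleteSpace E] (K : Set E) (F : E → ℝ) (ν : ℝ) : Prop where
  one_le_nu : 1 ≤ ν
  smooth : ContDiffOn ℝ 3 F (interior K)
  convexOn : ConvexOn ℝ (interior K) F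
  hess_posdef : ∀ x ∈ interior K, ∀ h : E, h ≠ 0 → 0 < ⟪hess F x h, h⟫
  selfConcordant : ∀ x ∈ interior K, ∀ h : E,
    |iteratedFDeriv ℝ 3 F x ![h, h, h]| ≤ 2 * ⟪hess F x h, h⟫ ^ ((3 : ℝ) / 2)
  logHom : ∀ x ∈ interior K, ∀ τ : ℝ, 0 < τ → F (τ • x) = F x - ν * Real.log τ

/-- Theorem `th-NCHess`: Hessian bounds along a segment for a normal
barrier with negative curvature, with `σ_x(h) = min{ρ ≥ 0 : ρ x − h ∈ K}`. -/
theorem negative_curvature_hessian_bounds {E : Type*} [NormedAddCommGroup E]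
    [InnerProductSpace ℝ E] [FiniteDimensional ℝ E]
    (K : Set E) (hK : IsRegularCone K) (F : E → ℝ) (ν : ℝ)
    (hF : IsNormalBarrier K F ν)
    (hNC : ∀ x ∈ interior K, ∀ h ∈ K, ∀ u : E, iteratedFDeriv ℝ 3 F x ![h, u, u] ≤ 0)
    (x : E) (hx : x ∈ interior K) (h : E) (hxh : x + h ∈ interior K)
    (σ : ℝ) (hσ : IsLeast {ρ : ℝ | 0 ≤ ρ ∧ ρ • x - h ∈ K} σ) :
    ∀ α : ℝ, 0 ≤ α → α < 1 → ∀ u : E,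
      1 / (1 + α * σ) ^ 2 * ⟪hess F x u, u⟫ ≤ ⟪hess F (x + α • h) u, u⟫ ∧
      ⟪hess F (x + α • h) u, u⟫ ≤ 1 / (1 - α) ^ 2 * ⟪hess F x u, u⟫ := by
  
  intro α hα0 hα1 u
  have hU : IsOpen (interior K) := isOpen_interior
  -- the interior is a cone
  have hUcone : ∀ τ : ℝ, 0 < τ → ∀ z ∈ interior K, τ • z ∈ interior K := by
    intro τ hτ z hz
    obtain ⟨t, htK, hto, hzt⟩ := mem_interior.mp hz
    refine mem_interior.mpr ⟨τ • t, ?_, hto.smul₀ hτ.ne', smul_mem_smul_set hzt⟩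
    rintro w ⟨v, hv, rfl⟩
    exact hK.smul_mem (htK hv) hτ.le
  -- the segment from x to x + h lies in the interior
  have hseg : ∀ t : ℝ, 0 ≤ t → t ≤ 1 → x + t • h ∈ interior K := by
    intro t h0 h1
    have hconv := hK.convex.interior hx hxh (by linarith : (0:ℝ) ≤ 1 - t) h0 (by ring)
    have : (1 - t) • x + t • (x + h) = x + t • h := by module
    rwa [this] at hconv
  have hCd : ∀ y ∈ interior K, ContDiffAt ℝ 3 F y := fun y hy =>
    hF.smooth.contDiffAt (hU.mem_nhds hy)
  have hdF : ∀ y ∈ interior K, DifferentiableAt ℝ F y := fun y hy =>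
    (hCd y hy).differentiableAt (by norm_num)
  have hd2 : ∀ y ∈ interior K, DifferentiableAt ℝ (fderiv ℝ F) y := fun y hy =>
    (ContDiffAt.fderiv_right (hCd y hy) (m := 2) (by norm_num)).differentiableAt (by norm_num)
  set G : E → ℝ := fun z => iteratedFDeriv ℝ 2 F z ![u, u] with hGdef
  have hGH : ∀ z : E, G z = fderiv ℝ (fderiv ℝ F) z u u := by
    intro z
    simp only [hGdef]
    rw [iteratedFDeriv_two_apply]
    simp
  have hGdiff2 : ∀ y ∈ interior K, DifferentiableAt ℝ (iteratedFDeriv ℝ 2 F) y := fun y hy =>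
    ((hCd y hy).iteratedFDeriv_right (m := 1) (by norm_num)).differentiableAt (by norm_num)
  have hGd : ∀ y ∈ interior K, DifferentiableAt ℝ G y := fun y hy =>
    (hGdiff2 y hy).continuousMultilinear_apply_const ![u, u]
  have hfderivG : ∀ y ∈ interior K, ∀ v : E,
      fderiv ℝ G y v = iteratedFDeriv ℝ 3 F y ![v, u, u] := by
    intro y hy v
    have h1 : fderiv ℝ G y v = fderiv ℝ (iteratedFDeriv ℝ 2 F) y v ![u, u] := by
      simp only [hGdef]
      exact fderiv_continuousMultilinear_apply_const_apply (hGdiff2 y hy) ![u, u] v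
    have h2 : iteratedFDeriv ℝ 3 F y ![v, u, u]
        = fderiv ℝ (iteratedFDeriv ℝ 2 F) y (![v, u, u] 0) (Fin.tail ![v, u, u]) :=
      iteratedFDeriv_succ_apply_left _
    rw [h1, h2, Matrix.cons_val_zero]
    congr 1
  -- relating the Hessian inner product to G
  have hhess : ∀ y ∈ interior K, ⟪hess F y u, u⟫ = G y := by
    intro y hy
    have hgd : DifferentiableAt ℝ (gradient F) y := by
      have hgr : gradient F = fun z => (InnerProductSpace.toDual ℝ E).symm (fderiv ℝ F z) := rfl
      rw [hgr]
      exact ((InnerProductSpace.toDual ℝ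
        E).symm.toContinuousLinearEquiv.differentiableAt).comp y (hd2 y hy)
    have hc : fderiv ℝ (fun z => (innerSL ℝ u) (gradient F z)) y
        = (innerSL ℝ u).comp (fderiv ℝ (gradient F) y) :=
      ((innerSL ℝ u).hasFDerivAt.comp y hgd.hasFDerivAt).fderiv
    have key : (fun z => (innerSL ℝ u) (gradient F z)) = fun z => (fderiv ℝ F z) u := by
      funext z
      show ⟪u, (InnerProductSpace.toDual ℝ E).symm (fderiv ℝ F z)⟫ = (fderiv ℝ F z) u
      rw [real_inner_comm, InnerProductSpace.toDual_symm_apply]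
    have h2 : fderiv ℝ (fun z => (fderiv ℝ F z) u) y = (fderiv ℝ (fderiv ℝ F) y).flip u := by
      rw [fderiv_clm_apply (hd2 y hy) (differentiableAt_const u)]
      simp
    have e1 : ⟪hess F y u, u⟫ = ((innerSL ℝ u).comp (fderiv ℝ (gradient F) y)) u := by
      rw [real_inner_comm]
      rfl
    rw [e1, ← hc, key, h2, hGH]
    rfl
  have hNC' : ∀ y ∈ interior K, ∀ k ∈ K, fderiv ℝ G y k ≤ 0 := by
    intro y hy k hk
    rw [hfderivG y hy k]
    exact hNC y hy k hk u
  have hGpos : ∀ y ∈ interior K, 0 ≤ G y := by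
    intro y hy
    rcases eq_or_ne u 0 with rfl | hu
    · rw [hGH]; simp
    · have := hF.hess_posdef y hy u hu
      rw [hhess y hy] at this
      linarith
  -- homogeneity of the first derivative
  have hH1 : ∀ τ : ℝ, 0 < τ → ∀ z ∈ interior K,
      fderiv ℝ F (τ • z) = τ⁻¹ • fderiv ℝ F z := by
    intro τ hτ z hz
    have hmem : τ • z ∈ interior K := hUcone τ hτ z hz
    have hsm : HasFDerivAt (fun w : E => τ • w) (τ • ContinuousLinearMap.id ℝ E) z :=
      (hasFDerivAt_id z).const_smul τ
    have hcomp : HasFDerivAt (fun w : E => F (τ • w))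
        ((fderiv ℝ F (τ • z)).comp (τ • ContinuousLinearMap.id ℝ E)) z :=
      (hdF _ hmem).hasFDerivAt.comp z hsm
    have heq : (fun w : E => F (τ • w)) =ᶠ[𝓝 z] fun w => F w - ν * Real.log τ :=
      Filter.eventuallyEq_of_mem (hU.mem_nhds hz) (fun w hw => hF.logHom w hw τ hτ)
    have e1 : (fderiv ℝ F (τ • z)).comp (τ • ContinuousLinearMap.id ℝ E) = fderiv ℝ F z := by
      rw [← hcomp.fderiv, heq.fderiv_eq, fderiv_sub_const]
    have e2 : τ • fderiv ℝ F (τ • z) = fderiv ℝ F z := by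
      rw [← e1]
      ext v
      simp [mul_comm]
    calc fderiv ℝ F (τ • z) = τ⁻¹ • (τ • fderiv ℝ F (τ • z)) := (inv_smul_smul₀ hτ.ne' _).symm
      _ = τ⁻¹ • fderiv ℝ F z := by rw [e2]
  -- homogeneity of the second derivative
  have hH2 : ∀ τ : ℝ, 0 < τ → ∀ z ∈ interior K,
      fderiv ℝ (fderiv ℝ F) (τ • z) = τ⁻¹ • τ⁻¹ • fderiv ℝ (fderiv ℝ F) z := by
    intro τ hτ z hz
    have hmem : τ • z ∈ interior K := hUcone τ hτ z hz
    have hsm : HasFDerivAt (fun w : E => τ • w) (τ • ContinuousLinearMap.id ℝ E) z :=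
      (hasFDerivAt_id z).const_smul τ
    have hcomp : HasFDerivAt (fun w : E => fderiv ℝ F (τ • w))
        ((fderiv ℝ (fderiv ℝ F) (τ • z)).comp (τ • ContinuousLinearMap.id ℝ E)) z :=
      (hd2 _ hmem).hasFDerivAt.comp z hsm
    have heq : (fun w : E => fderiv ℝ F (τ • w)) =ᶠ[𝓝 z] fun w => τ⁻¹ • fderiv ℝ F w :=
      Filter.eventuallyEq_of_mem (hU.mem_nhds hz) (fun w hw => hH1 τ hτ w hw)
    have e1 : (fderiv ℝ (fderiv ℝ F) (τ • z)).comp (τ • ContinuousLinearMap.id ℝ E)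
        = τ⁻¹ • fderiv ℝ (fderiv ℝ F) z := by
      rw [← hcomp.fderiv, heq.fderiv_eq, fderiv_fun_const_smul (hd2 z hz)]
    have e2 : τ • fderiv ℝ (fderiv ℝ F) (τ • z) = τ⁻¹ • fderiv ℝ (fderiv ℝ F) z := by
      rw [← e1]
      ext v w
      simp [mul_comm]
    calc fderiv ℝ (fderiv ℝ F) (τ • z)
        = τ⁻¹ • (τ • fderiv ℝ (fderiv ℝ F) (τ • z)) := (inv_smul_smul₀ hτ.ne' _).symm
      _ = τ⁻¹ • τ⁻¹ • fderiv ℝ (fderiv ℝ F) z := by rw [e2]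
  have hGhom : ∀ τ : ℝ, 0 < τ → ∀ y ∈ interior K, G (τ • y) = (τ ^ 2)⁻¹ * G y := by
    intro τ hτ y hy
    rw [hGH, hGH, hH2 τ hτ y hy]
    simp [ContinuousLinearMap.smul_apply, smul_eq_mul, sq, mul_inv]
    ring
  -- the Euler-type identity for G
  have hhom : ∀ y ∈ interior K, fderiv ℝ G y y = -2 * G y := by
    intro y hy
    have hc : HasDerivAt (fun τ : ℝ => τ • y) y 1 := by
      simpa using (hasDerivAt_id (1:ℝ)).smul_const y
    have hGf : HasFDerivAt G (fderiv ℝ G y) ((1:ℝ) • y) := by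
      rw [one_smul]
      exact (hGd y hy).hasFDerivAt
    have h1 : HasDerivAt (fun τ : ℝ => G (τ • y)) (fderiv ℝ G y y) 1 :=
      by have := hGf.comp_hasDerivAt 1 hc; exact this
    have h2 : HasDerivAt (fun τ : ℝ => (τ ^ 2)⁻¹ * G y) (-2 * G y) 1 := by
      have hp : HasDerivAt (fun τ : ℝ => τ ^ 2) (2 * 1 ^ 1) 1 := by
        simpa using hasDerivAt_pow 2 (1:ℝ)
      have h3 : HasDerivAt (fun τ : ℝ => (τ ^ 2)⁻¹ * G y) (-(2 * 1 ^ 1) / (1 ^ 2) ^ 2 * G y) 1 :=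
        (hp.inv (by norm_num)).mul_const (G y)
      convert h3 using 1
      norm_num
    have heq : (fun τ : ℝ => G (τ • y)) =ᶠ[𝓝 (1:ℝ)] fun τ => (τ ^ 2)⁻¹ * G y := by
      filter_upwards [eventually_gt_nhds (by norm_num : (0:ℝ) < 1)] with τ hτ
      exact hGhom τ hτ y hy
    have e1 := h1.deriv
    rw [heq.deriv_eq, h2.deriv] at e1
    exact e1.symm
  -- the function along the segment
  set φ : ℝ → ℝ := fun t => G (x + t • h) with hφdef
  have hφd : ∀ t : ℝ, x + t • h ∈ interior K →
      HasDerivAt φ (fderiv ℝ G (x + t • h) h) t := by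
    intro t ht
    have hc : HasDerivAt (fun s : ℝ => x + s • h) h t := by
      simpa using ((hasDerivAt_id t).smul_const h).const_add x
    exact ((hGd _ ht).hasFDerivAt).comp_hasDerivAt t hc
  -- derivative bounds
  have hupper : ∀ t : ℝ, 0 ≤ t → t < 1 →
      (1 - t) * fderiv ℝ G (x + t • h) h ≤ 2 * φ t := by
    intro t h0 h1
    have hin := hseg t h0 h1.le
    have e : (1 - t) • h = (x + h) - (x + t • h) := by module
    have e2 : (1 - t) * fderiv ℝ G (x + t • h) h
        = fderiv ℝ G (x + t • h) ((1 - t) • h) := by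
      rw [map_smul]; simp
    rw [e2, e, map_sub, hhom _ hin]
    have h2 := hNC' _ hin (x + h) (interior_subset hxh)
    have h3 := hGpos _ hin
    have hφt : φ t = G (x + t • h) := rfl
    rw [hφt]
    linarith
  have hlower : ∀ t : ℝ, 0 ≤ t → t < 1 →
      -(2 * σ) * φ t ≤ (1 + t * σ) * fderiv ℝ G (x + t • h) h := by
    intro t h0 h1
    have hin := hseg t h0 h1.le
    have e : (1 + t * σ) • h = σ • (x + t • h) + (h - σ • x) := by module
    have e2 : (1 + t * σ) * fderiv ℝ G (x + t • h) h
        = fderiv ℝ G (x + t • h) ((1 + t * σ) • h) := by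
      rw [map_smul]; simp
    rw [e2, e, map_add, map_smul, hhom _ hin]
    have h2 : fderiv ℝ G (x + t • h) (h - σ • x)
        = - fderiv ℝ G (x + t • h) (σ • x - h) := by
      rw [← map_neg]
      congr 1
      module
    have h3 := hNC' _ hin (σ • x - h) hσ.1.2
    have h4 := hGpos _ hin
    have hσ0 : 0 ≤ σ := hσ.1.1
    have hφt : φ t = G (x + t • h) := rfl
    rw [hφt, h2]
    simp only [smul_eq_mul]
    nlinarith
  -- membership along [0, α]
  have hIccU : ∀ t ∈ Icc (0:ℝ) α, x + t • h ∈ interior K := fun t ht =>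
    hseg t ht.1 (ht.2.trans hα1.le)
  -- upper bound via antitonicity of (1-t)^2 φ(t)
  have hderivf1 : ∀ t ∈ Icc (0:ℝ) α, HasDerivAt (fun s => (1 - s) ^ 2 * φ s)
      ((↑2 * (1 - t) ^ 1 * -1) * φ t + (1 - t) ^ 2 * fderiv ℝ G (x + t • h) h) t := by
    intro t ht
    exact (((hasDerivAt_id t).const_sub 1).pow 2).mul (hφd t (hIccU t ht))
  have hanti : AntitoneOn (fun s => (1 - s) ^ 2 * φ s) (Icc 0 α) := by
    apply antitoneOn_of_deriv_nonpos (convex_Icc 0 α)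
    · exact fun t ht => (hderivf1 t ht).continuousAt.continuousWithinAt
    · intro t ht
      rw [interior_Icc] at ht
      exact (hderivf1 t ⟨ht.1.le, ht.2.le⟩).differentiableAt.differentiableWithinAt
    · intro t ht
      rw [interior_Icc] at ht
      have h0 : 0 ≤ t := ht.1.le
      have h1 : t < 1 := ht.2.trans hα1
      rw [(hderivf1 t ⟨ht.1.le, ht.2.le⟩).deriv]
      have hb := hupper t h0 h1
      have hφpos : 0 ≤ φ t := hGpos _ (hseg t h0 h1.le)
      have h1t : (0:ℝ) < 1 - t := by linarith
      nlinarith [mul_le_mul_of_nonneg_left hb h1t.le]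
  -- lower bound via monotonicity of (1+tσ)^2 φ(t)
  have hσ0 : 0 ≤ σ := hσ.1.1
  have hderivf2 : ∀ t ∈ Icc (0:ℝ) α, HasDerivAt (fun s => (1 + s * σ) ^ 2 * φ s)
      ((↑2 * (1 + t * σ) ^ 1 * (1 * σ)) * φ t
        + (1 + t * σ) ^ 2 * fderiv ℝ G (x + t • h) h) t := by
    intro t ht
    exact ((((hasDerivAt_id t).mul_const σ).const_add 1).pow 2).mul (hφd t (hIccU t ht))
  have hmono : MonotoneOn (fun s => (1 + s * σ) ^ 2 * φ s) (Icc 0 α) := by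
    apply monotoneOn_of_deriv_nonneg (convex_Icc 0 α)
    · exact fun t ht => (hderivf2 t ht).continuousAt.continuousWithinAt
    · intro t ht
      rw [interior_Icc] at ht
      exact (hderivf2 t ⟨ht.1.le, ht.2.le⟩).differentiableAt.differentiableWithinAt
    · intro t ht
      rw [interior_Icc] at ht
      have h0 : 0 ≤ t := ht.1.le
      have h1 : t < 1 := ht.2.trans hα1
      rw [(hderivf2 t ⟨ht.1.le, ht.2.le⟩).deriv]
      have hb := hlower t h0 h1
      have hφpos : 0 ≤ φ t := hGpos _ (hseg t h0 h1.le)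
      have h1t : (0:ℝ) < 1 + t * σ := by nlinarith
      nlinarith [mul_le_mul_of_nonneg_left hb h1t.le]
  -- conclude
  have h0mem : (0:ℝ) ∈ Icc (0:ℝ) α := ⟨le_rfl, hα0⟩
  have hαmem : α ∈ Icc (0:ℝ) α := ⟨hα0, le_rfl⟩
  have hxαU := hseg α hα0 hα1.le
  have hφ0 : φ 0 = G x := by
    rw [hφdef]
    norm_num
  have hφα : φ α = G (x + α • h) := rfl
  have hupper' := hanti h0mem hαmem hα0
  have hlower' := hmono h0mem hαmem hα0
  simp only [hφ0, hφα] at hupper' hlower'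
  rw [hhess x hx, hhess _ hxαU]
  have h1α : (0:ℝ) < (1 - α) ^ 2 := pow_pos (by linarith) 2
  have h1ασ : (0:ℝ) < (1 + α * σ) ^ 2 := pow_pos (by nlinarith) 2
  constructor
  · rw [div_mul_eq_mul_div, one_mul, div_le_iff₀ h1ασ]
    nlinarith
  · rw [div_mul_eq_mul_div, one_mul, le_div_iff₀ h1α]
    nlinarith
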